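/- Let (X,*) be a topological group with identity x₀ whose topology is induced by a metric d, and suppose {T_α}_{α∈[0,∞)} is a dilation family on (X,d,x₀) consisting of group homomorphisms. If the family of left translations {ρ_c}_{c∈X}, ρ_c(x) = c*x, is equicontinuous with respect to d, then D(x,y) := sup{ d(c*x, c*y) : c ∈ X } is a well-defined left-translation-invariant metric on X inducing the same topology as d, and {T_α}_{α∈[0,∞)} is a dilation family on (X,D,x₀). -/

import Mathlib

open Filter Topology Set

/-- A dilation family on `(X, d, x₀)` indexed by a multiplicatively closed
set `I ⊆ ℝ≥0`. -/
def IsDilationFamily {X : Type*} [MetricSpace X] (I : Set ℝ) (T : ℝ → X → X) (x₀ : X) : Prop :=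
  I ⊆ Set.Ici 0 ∧
  (∀ α ∈ I, ∀ β ∈ I, α * β ∈ I) ∧
  (∀ α ∈ I, ∀ x y : X, dist (T α x) (T α y) = α * dist x y) ∧
  (∀ α ∈ I, T α x₀ = x₀) ∧
  (∀ α ∈ I, ∀ β ∈ I, ∀ x : X, T α (T β x) = T (α * β) x) ∧
  (∀ x : X, ∃ L : X, Tendsto (fun α => T α x) (𝓝[I] 1) (𝓝 L))

/-- `D(x,y) = sup { d(c*x, c*y) : c ∈ X }`. -/
noncomputable def transDist {X : Type*} [Group X] [MetricSpace X] (x y : X) : ℝ :=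
  ⨆ c : X, dist (c * x) (c * y)

/-- For a metrizable topological group with a dilation family of group homomorphisms about
the identity and equicontinuous left translations, `D(x,y) = sup_c d(c*x, c*y)` is a
well-defined left-invariant metric inducing the same topology, with respect to which the
family is again a dilation family. -/
theorem stmt_18 {X : Type*} [Group X] [MetricSpace X] [IsTopologicalGroup X]
    (T : ℝ → X → X)
    (hT : IsDilationFamily (Set.Ici 0) T (1 : X))
    (hhom : ∀ α ∈ Set.Ici (0 : ℝ), ∀ x y : X, T α (x * y) = T α x * T α y)
    (hequi : ∀ x : X, ∀ ε > (0 : ℝ), ∃ δ > (0 : ℝ), ∀ y : X, dist x y < δ →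
      ∀ c : X, dist (c * x) (c * y) < ε) :
    (∀ x y : X, BddAbove (Set.range fun c : X => dist (c * x) (c * y))) ∧
    (∀ x y : X, 0 ≤ transDist x y) ∧
    (∀ x y : X, transDist x y = transDist y x) ∧
    (∀ x y : X, transDist x y = 0 ↔ x = y) ∧
    (∀ x y z : X, transDist x z ≤ transDist x y + transDist y z) ∧
    (∀ z x y : X, transDist (z * x) (z * y) = transDist x y) ∧
    (∀ s : Set X, IsOpen s ↔ ∀ x ∈ s, ∃ ε > (0 : ℝ), ∀ y, transDist x y < ε → y ∈ s) ∧
    (∀ α ∈ Set.Ici (0 : ℝ), ∀ x y : X, transDist (T α x) (T α y) = α * transDist x y) ∧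
    (∀ x : X, Tendsto (fun α => T α x) (𝓝[Set.Ici (0 : ℝ)] 1) (𝓝 x)) := by
  obtain ⟨-, hmul, hdist, hfix, hcomp, hlim⟩ := hT
  -- T 1 = id
  have hT1 : ∀ x : X, T 1 x = x := by
    intro x
    have hinj : ∀ a b : X, T 1 a = T 1 b → a = b := by
      intro a b h
      have h1 := hdist 1 (Set.mem_Ici.mpr zero_le_one) a b
      rw [h, dist_self] at h1
      have h2 : dist a b = 0 := by linarith
      exact dist_eq_zero.mp h2
    have := hcomp 1 (Set.mem_Ici.mpr zero_le_one) 1 (Set.mem_Ici.mpr zero_le_one) x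
    rw [one_mul] at this
    exact hinj _ _ this
  -- inverses
  have hTinv : ∀ α : ℝ, 0 < α → ∀ x : X, T α⁻¹ (T α x) = x := by
    intro α hα x
    rw [hcomp α⁻¹ (Set.mem_Ici.mpr (by positivity)) α (Set.mem_Ici.mpr hα.le) x,
      inv_mul_cancel₀ hα.ne', hT1]
  have hTsurj : ∀ α : ℝ, 0 < α → Function.Surjective (T α) := by
    intro α hα x
    refine ⟨T α⁻¹ x, ?_⟩
    rw [hcomp α (Set.mem_Ici.mpr hα.le) α⁻¹ (Set.mem_Ici.mpr (by positivity)),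
      mul_inv_cancel₀ hα.ne', hT1]
  -- boundedness
  have hbdd : ∀ x y : X, BddAbove (Set.range fun c : X => dist (c * x) (c * y)) := by
    intro x y
    obtain ⟨δ, hδ, hδ1⟩ := hequi 1 1 one_pos
    simp only [mul_one] at hδ1
    set g := x⁻¹ * y with hg
    set α : ℝ := δ / (2 * (dist (1:X) g + 1)) with hαdef
    have hdg : 0 ≤ dist (1:X) g := dist_nonneg
    have hα : 0 < α := by positivity
    have hsmall : α * dist (1:X) g < δ := by
      rw [hαdef, div_mul_eq_mul_div, div_lt_iff₀ (by positivity)]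
      nlinarith
    have hTg : ∀ c : X, dist c (c * T α g) < 1 := by
      intro c
      apply hδ1
      have : dist (1:X) (T α g) = α * dist (1:X) g := by
        have := hdist α (Set.mem_Ici.mpr hα.le) 1 g
        rwa [hfix α (Set.mem_Ici.mpr hα.le)] at this
      rw [this]; exact hsmall
    refine ⟨α⁻¹, ?_⟩
    rintro _ ⟨c, rfl⟩
    have hy : y = x * g := by rw [hg, mul_inv_cancel_left]
    have key : dist (c * x) (c * y) = α⁻¹ * dist (T α (c * x)) (T α (c * x) * T α g) := by
      rw [← hhom α (Set.mem_Ici.mpr hα.le),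
        ← hdist α⁻¹ (Set.mem_Ici.mpr (by positivity)), hTinv α hα,
        hTinv α hα, hy, mul_assoc]
    show dist (c * x) (c * y) ≤ α⁻¹
    rw [key]
    have := (hTg (T α (c * x))).le
    calc α⁻¹ * dist (T α (c*x)) (T α (c*x) * T α g) ≤ α⁻¹ * 1 := by
          exact mul_le_mul_of_nonneg_left this (by positivity)
      _ = α⁻¹ := mul_one _
  have hle : ∀ x y : X, dist x y ≤ transDist x y := by
    intro x y
    have := le_ciSup (hbdd x y) (1 : X)
    simpa [transDist] using this
  have hnonneg : ∀ x y : X, 0 ≤ transDist x y :=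
    fun x y => le_trans dist_nonneg (hle x y)
  have hsymm : ∀ x y : X, transDist x y = transDist y x := by
    intro x y; unfold transDist; simp_rw [dist_comm]
  have heq0 : ∀ x y : X, transDist x y = 0 ↔ x = y := by
    intro x y
    constructor
    · intro h
      have := hle x y
      rw [h] at this
      exact dist_le_zero.mp this
    · rintro rfl; unfold transDist; simp
  have htri : ∀ x y z : X, transDist x z ≤ transDist x y + transDist y z := by
    intro x y z
    have : Nonempty X := ⟨1⟩
    apply ciSup_le
    intro c
    calc dist (c*x) (c*z) ≤ dist (c*x) (c*y) + dist (c*y) (c*z) := dist_triangle _ _ _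
      _ ≤ transDist x y + transDist y z :=
        add_le_add (le_ciSup (hbdd x y) c) (le_ciSup (hbdd y z) c)
  have hinv : ∀ z x y : X, transDist (z * x) (z * y) = transDist x y := by
    intro z x y
    unfold transDist
    rw [iSup, iSup]
    congr 1
    ext r
    constructor
    · rintro ⟨c, rfl⟩; exact ⟨c * z, by simp [mul_assoc]⟩
    · rintro ⟨c, rfl⟩; exact ⟨c * z⁻¹, by simp [mul_assoc]⟩
  have htop : ∀ s : Set X, IsOpen s ↔ ∀ x ∈ s, ∃ ε > (0 : ℝ), ∀ y, transDist x y < ε → y ∈ s := by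
    intro s
    rw [Metric.isOpen_iff]
    constructor
    · intro h x hx
      obtain ⟨ε, hε, hb⟩ := h x hx
      refine ⟨ε, hε, fun y hy => hb ?_⟩
      rw [Metric.mem_ball, dist_comm]
      exact lt_of_le_of_lt (hle x y) hy
    · intro h x hx
      obtain ⟨ε, hε, hb⟩ := h x hx
      obtain ⟨δ, hδ, hδ1⟩ := hequi x (ε/2) (by linarith)
      refine ⟨δ, hδ, fun y hy => ?_⟩
      apply hb
      have : Nonempty X := ⟨1⟩
      have : transDist x y ≤ ε/2 :=
        ciSup_le fun c => (hδ1 y (Metric.mem_ball'.mp hy) c).le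
      linarith
  have hscale : ∀ α ∈ Set.Ici (0 : ℝ), ∀ x y : X,
      transDist (T α x) (T α y) = α * transDist x y := by
    rintro α (hα : (0:ℝ) ≤ α) x y
    rcases eq_or_lt_of_le hα with rfl | hα'
    · have h0 : ∀ z : X, T 0 z = 1 := by
        intro z
        have := hdist 0 (Set.mem_Ici.mpr le_rfl) z 1
        rw [zero_mul, hfix 0 (Set.mem_Ici.mpr le_rfl)] at this
        exact dist_eq_zero.mp this
      rw [h0 x, h0 y, zero_mul, (heq0 _ _).mpr rfl]
    · have hrange : (Set.range fun c : X => dist (c * T α x) (c * T α y)) =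
          Set.range fun c : X => α * dist (c * x) (c * y) := by
        ext r
        constructor
        · rintro ⟨c, rfl⟩
          obtain ⟨d, rfl⟩ := hTsurj α hα' c
          refine ⟨d, ?_⟩
          show α * dist (d * x) (d * y) = dist (T α d * T α x) (T α d * T α y)
          rw [← hhom α (Set.mem_Ici.mpr hα'.le), ← hhom α (Set.mem_Ici.mpr hα'.le),
            hdist α (Set.mem_Ici.mpr hα'.le)]
        · rintro ⟨c, rfl⟩
          refine ⟨T α c, ?_⟩
          show dist (T α c * T α x) (T α c * T α y) = α * dist (c * x) (c * y)
          rw [← hhom α (Set.mem_Ici.mpr hα'.le), ← hhom α (Set.mem_Ici.mpr hα'.le),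
            hdist α (Set.mem_Ici.mpr hα'.le)]
      unfold transDist
      rw [iSup, hrange, ← iSup, ← Real.mul_iSup_of_nonneg hα'.le]
  have hlimit : ∀ x : X, Tendsto (fun α => T α x) (𝓝[Set.Ici (0 : ℝ)] 1) (𝓝 x) := by
    intro x
    obtain ⟨L, hL⟩ := hlim x
    have hpure : (pure (1:ℝ) : Filter ℝ) ≤ 𝓝[Set.Ici (0:ℝ)] 1 :=
      le_inf (pure_le_nhds 1) (le_principal_iff.mpr (by simp))
    have h1 : Tendsto (fun α => T α x) (pure (1:ℝ)) (𝓝 L) := hL.mono_left hpure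
    have h2 : Tendsto (fun α => T α x) (pure (1:ℝ)) (𝓝 (T 1 x)) := tendsto_pure_nhds _ _
    have : L = T 1 x := tendsto_nhds_unique h1 h2
    rw [this, hT1] at hL
    exact hL
  exact ⟨hbdd, hnonneg, hsymm, heq0, htri, hinv, htop, hscale, hlimit⟩
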